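/- The thermodynamic energy per unit area of the almost-bosonic anyon gas satisfies the scaling law e(β,ρ) = β ρ² e(1,1) for all β ≥ 0 and ρ ≥ 0. -/

import Mathlib

noncomputable section

open MeasureTheory Filter Topology Pointwise Set Metric

abbrev E2 := EuclideanSpace ℝ (Fin 2)

/-- `x^⊥ = (-x₂, x₁)`. -/
def perp (z : E2) : E2 := WithLp.toLp 2 (fun i : Fin 2 => if i = 0 then -(z 1) else z 0)

/-- `∇^⊥ w₀ (z) = z^⊥ / |z|²` where `w₀(z) = log |z|`. -/
def gradPerpW0 (z : E2) : E2 := (‖z‖ ^ 2)⁻¹ • perp z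

/-- The self-consistent vector potential `A[ϱ](x) = ∫ ∇^⊥w₀(x−y) ϱ(y) dy`. -/
def vecA (ϱ : E2 → ℝ) (x : E2) : E2 := ∫ y, ϱ y • gradPerpW0 (x - y)

/-- the `j`-th component of the covariant gradient `(∇ + iβA[ϱ])u` at `x`. -/
def covGrad (β : ℝ) (ϱ : E2 → ℝ) (u : E2 → ℂ) (x : E2) (j : Fin 2) : ℂ :=
  fderiv ℝ u x (EuclideanSpace.single j 1) + (((β * vecA ϱ x j : ℝ)) : ℂ) * Complex.I * u x

/-- Magnetic kinetic energy `∫_Ω |(-i∇ + βA[ϱ])u|²` with a prescribed density `ϱ`. -/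
def magKinetic (Ω : Set E2) (β : ℝ) (ϱ : E2 → ℝ) (u : E2 → ℂ) : ℝ :=
  ∫ x in Ω, ∑ j : Fin 2, ‖covGrad β ϱ u x j‖ ^ 2

/-- `|u|²` extended by zero outside `Ω`. -/
def density (Ω : Set E2) (u : E2 → ℂ) : E2 → ℝ := Ω.indicator fun y => ‖u y‖ ^ 2

/-- The average-field functional `ℰ^{af}_{Ω,β}[u] = ∫_Ω |(-i∇+βA[|u|²1_Ω])u|²`. -/
def afEnergy (Ω : Set E2) (β : ℝ) (u : E2 → ℂ) : ℝ := magKinetic Ω β (density Ω u) u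

/-- Membership in `H¹(Ω)`. -/
def MemH1 (Ω : Set E2) (u : E2 → ℂ) : Prop :=
  AEStronglyMeasurable u (volume.restrict Ω) ∧
  Integrable (fun x => ‖u x‖ ^ 2) (volume.restrict Ω) ∧
  (∀ᵐ x ∂(volume.restrict Ω), DifferentiableAt ℝ u x) ∧
  Integrable (fun x => ‖fderiv ℝ u x‖ ^ 2) (volume.restrict Ω)

/-- Membership in `H¹₀(Ω)`: an `H¹` function on all of `ℝ²` vanishing outside `Ω`. -/
def MemH10 (Ω : Set E2) (u : E2 → ℂ) : Prop :=
  MemH1 univ u ∧ ∀ x ∉ Ω, u x = 0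

/-- mass `∫_Ω |u|²`. -/
def mass (Ω : Set E2) (u : E2 → ℂ) : ℝ := ∫ x in Ω, ‖u x‖ ^ 2

/-- Dirichlet ground-state energy `E₀(Ω,β,M)`. -/
def dirichletE (Ω : Set E2) (β M : ℝ) : ℝ :=
  sInf {e | ∃ u, MemH10 Ω u ∧ mass Ω u = M ∧ e = afEnergy Ω β u}

/-- Neumann ground-state energy `E(Ω,β,M)`. -/
def neumannE (Ω : Set E2) (β M : ℝ) : ℝ :=
  sInf {e | ∃ u, MemH1 Ω u ∧ mass Ω u = M ∧ e = afEnergy Ω β u}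

/-- The open unit square `Q ⊂ ℝ²`. -/
def unitSquare : Set E2 := {x | x 0 ∈ Ioo (0:ℝ) 1 ∧ x 1 ∈ Ioo (0:ℝ) 1}

/-- `Ω` has Lipschitz boundary: near each boundary point, up to a rigid (linear isometric)
change of coordinates, `Ω` is the subgraph of a Lipschitz function. -/
def HasLipschitzBoundary (Ω : Set E2) : Prop :=
  ∀ x ∈ frontier Ω, ∃ ε : ℝ, 0 < ε ∧ ∃ (g : E2 ≃ₗᵢ[ℝ] E2) (f : ℝ → ℝ) (K : NNReal),
    LipschitzWith K f ∧
    Ω ∩ ball x ε = {y ∈ ball x ε | (g (y - x)) 1 < f ((g (y - x)) 0)}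

lemma perp_smul (a : ℝ) (z : E2) : perp (a • z) = a • perp z := by
  ext i
  simp only [perp, PiLp.smul_apply, smul_eq_mul, PiLp.toLp_apply]
  split <;> ring

lemma gradPerpW0_smul {a : ℝ} (ha : a ≠ 0) (z : E2) :
    gradPerpW0 (a • z) = a⁻¹ • gradPerpW0 z := by
  unfold gradPerpW0
  rw [perp_smul, norm_smul, smul_smul, smul_smul]
  congr 1
  rw [Real.norm_eq_abs, mul_pow, sq_abs, mul_inv]
  rcases eq_or_ne ‖z‖ 0 with h | h
  · simp [h]
  · have ha2 : a^2 ≠ 0 := pow_ne_zero _ ha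
    field_simp

lemma vecA_scale {l : ℝ} (hl : 0 < l) (k : ℝ) (ϱ : E2 → ℝ) (x : E2) :
    vecA (fun y => k * ϱ (l • y)) x = (k * l⁻¹) • vecA ϱ (l • x) := by
  unfold vecA
  have h1 : (fun y => (k * ϱ (l • y)) • gradPerpW0 (x - y))
      = fun y => (fun z => (k * ϱ z) • gradPerpW0 (x - l⁻¹ • z)) (l • y) := by
    funext y
    simp [inv_smul_smul₀ hl.ne']
  rw [h1, MeasureTheory.Measure.integral_comp_smul_of_nonneg volume
    (fun z => (k * ϱ z) • gradPerpW0 (x - l⁻¹ • z)) l (hR := hl.le)]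
  have h2 : (fun z => (k * ϱ z) • gradPerpW0 (x - l⁻¹ • z))
      = fun z => (k * l) • (ϱ z • gradPerpW0 (l • x - z)) := by
    funext z
    have : x - l⁻¹ • z = l⁻¹ • (l • x - z) := by
      rw [smul_sub, inv_smul_smul₀ hl.ne']
    rw [this, gradPerpW0_smul (inv_ne_zero hl.ne'), inv_inv, smul_smul, smul_smul]
    congr 1
    ring
  rw [h2, integral_smul, smul_smul]
  congr 1
  simp only [finrank_euclideanSpace_fin]
  field_simp

lemma hasFDerivAt_scale (c l : ℝ) (u : E2 → ℂ) {x : E2}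
    (hd : DifferentiableAt ℝ u (l • x)) :
    HasFDerivAt (fun y => (c : ℂ) * u (l • y)) ((c : ℂ) • (l • fderiv ℝ u (l • x))) x := by
  have h1 : HasFDerivAt (fun y : E2 => l • y) (l • ContinuousLinearMap.id ℝ E2) x :=
    (hasFDerivAt_id x).const_smul l
  have h2 := hd.hasFDerivAt.comp x h1
  have h3 : (fderiv ℝ u (l • x)).comp (l • ContinuousLinearMap.id ℝ E2)
      = l • fderiv ℝ u (l • x) := by
    ext w; simp
  rw [h3] at h2
  exact h2.const_mul _

lemma differentiableAt_scale_iff {c l : ℝ} (hc : c ≠ 0) (hl : l ≠ 0) (u : E2 → ℂ) (x : E2) :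
    DifferentiableAt ℝ (fun y => (c : ℂ) * u (l • y)) x ↔ DifferentiableAt ℝ u (l • x) := by
  constructor
  · intro hv
    have hu : u = fun y => ((c⁻¹ : ℝ) : ℂ) * ((fun y => (c : ℂ) * u (l • y)) (l⁻¹ • y)) := by
      funext y
      have hcc : (c : ℂ) ≠ 0 := by exact_mod_cast hc
      push_cast
      rw [smul_inv_smul₀ hl]
      field_simp
    have hx : DifferentiableAt ℝ (fun y => (c : ℂ) * u (l • y)) (l⁻¹ • (l • x)) := by
      rw [inv_smul_smul₀ hl]; exact hv
    have hd := (hasFDerivAt_scale c⁻¹ l⁻¹ (fun y => (c : ℂ) * u (l • y)) hx).differentiableAt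
    rw [← hu] at hd
    exact hd
  · intro hd
    exact (hasFDerivAt_scale c l u hd).differentiableAt

lemma fderiv_scale {c l : ℝ} (hc : c ≠ 0) (hl : l ≠ 0) (u : E2 → ℂ) (x : E2) :
    fderiv ℝ (fun y => (c : ℂ) * u (l • y)) x = (c : ℂ) • (l • fderiv ℝ u (l • x)) := by
  by_cases hd : DifferentiableAt ℝ u (l • x)
  · exact (hasFDerivAt_scale c l u hd).fderiv
  · rw [fderiv_zero_of_not_differentiableAt hd,
      fderiv_zero_of_not_differentiableAt
        (fun h => hd ((differentiableAt_scale_iff hc hl u x).1 h))]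
    ext v; simp

lemma density_scale {l : ℝ} (hl : l ≠ 0) (c : ℝ) (Ω : Set E2) (u : E2 → ℂ) :
    density (l⁻¹ • Ω) (fun y => (c : ℂ) * u (l • y))
      = fun y => c ^ 2 * density Ω u (l • y) := by
  funext y
  have hnorm : ‖(c : ℂ) * u (l • y)‖ ^ 2 = c ^ 2 * ‖u (l • y)‖ ^ 2 := by
    rw [norm_mul, Complex.norm_real, Real.norm_eq_abs, mul_pow, sq_abs]
  by_cases hy : l • y ∈ Ω
  · have hy' : y ∈ l⁻¹ • Ω := by rw [Set.mem_inv_smul_set_iff₀ hl]; exact hy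
    simp only [density, Set.indicator_of_mem hy', Set.indicator_of_mem hy]
    exact hnorm
  · have hy' : y ∉ l⁻¹ • Ω := by rw [Set.mem_inv_smul_set_iff₀ hl]; exact hy
    simp only [density, Set.indicator_of_notMem hy', Set.indicator_of_notMem hy, mul_zero]

lemma covGrad_scale {c l : ℝ} (hc : 0 < c) (hl : 0 < l) (Ω : Set E2) (β : ℝ) (u : E2 → ℂ)
    (x : E2) (j : Fin 2) :
    covGrad β (density (l⁻¹ • Ω) (fun y => (c : ℂ) * u (l • y)))
        (fun y => (c : ℂ) * u (l • y)) x j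
      = ((c * l : ℝ) : ℂ) * covGrad (β * c ^ 2 * (l ^ 2)⁻¹) (density Ω u) u (l • x) j := by
  unfold covGrad
  rw [density_scale hl.ne' c Ω u, vecA_scale hl (c ^ 2) (density Ω u) x,
    fderiv_scale hc.ne' hl.ne' u x]
  have hcl : (l : ℂ) ≠ 0 := by exact_mod_cast hl.ne'
  simp only [ContinuousLinearMap.smul_apply, PiLp.smul_apply, smul_eq_mul,
    Complex.real_smul, Complex.ofReal_mul, Complex.ofReal_inv, Complex.ofReal_pow]
  field_simp

lemma smul_inv_smul_set {l : ℝ} (hl : l ≠ 0) (Ω : Set E2) : l • (l⁻¹ • Ω) = Ω := by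
  rw [smul_smul, mul_inv_cancel₀ hl, one_smul]

lemma afEnergy_scale {c l : ℝ} (hc : 0 < c) (hl : 0 < l) (Ω : Set E2) (β : ℝ) (u : E2 → ℂ) :
    afEnergy (l⁻¹ • Ω) β (fun y => (c : ℂ) * u (l • y))
      = c ^ 2 * afEnergy Ω (β * c ^ 2 * (l ^ 2)⁻¹) u := by
  unfold afEnergy magKinetic
  have key : (fun x => ∑ j : Fin 2, ‖covGrad β (density (l⁻¹ • Ω) (fun y => (c : ℂ) * u (l • y)))
      (fun y => (c : ℂ) * u (l • y)) x j‖ ^ 2)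
      = fun x => (fun y => (c * l) ^ 2 *
        ∑ j : Fin 2, ‖covGrad (β * c ^ 2 * (l ^ 2)⁻¹) (density Ω u) u y j‖ ^ 2) (l • x) := by
    funext x
    simp only [covGrad_scale hc hl Ω β u x]
    rw [Finset.mul_sum]
    congr 1
    funext j
    rw [norm_mul, Complex.norm_real, Real.norm_eq_abs, mul_pow, sq_abs]
  have hCoV := MeasureTheory.Measure.setIntegral_comp_smul_of_pos volume
    (fun y => (c * l) ^ 2 * ∑ j : Fin 2, ‖covGrad (β * c ^ 2 * (l ^ 2)⁻¹)
      (density Ω u) u y j‖ ^ 2) (l⁻¹ • Ω) hl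
  rw [key, hCoV, smul_inv_smul_set hl.ne', integral_const_mul, smul_eq_mul]
  simp only [finrank_euclideanSpace_fin]
  field_simp

lemma mass_scale {l : ℝ} (hl : 0 < l) (c : ℝ) (Ω : Set E2) (u : E2 → ℂ) :
    mass (l⁻¹ • Ω) (fun y => (c : ℂ) * u (l • y)) = c ^ 2 * (l ^ 2)⁻¹ * mass Ω u := by
  unfold mass
  have key : (fun x => ‖(c : ℂ) * u (l • x)‖ ^ 2)
      = fun x => (fun y => c ^ 2 * ‖u y‖ ^ 2) (l • x) := by
    funext x
    rw [norm_mul, Complex.norm_real, Real.norm_eq_abs, mul_pow, sq_abs]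
  have hCoV := MeasureTheory.Measure.setIntegral_comp_smul_of_pos volume
    (fun y => c ^ 2 * ‖u y‖ ^ 2) (l⁻¹ • Ω) hl
  rw [key, hCoV, smul_inv_smul_set hl.ne', integral_const_mul, smul_eq_mul]
  simp only [finrank_euclideanSpace_fin]
  field_simp

lemma memH10_scale {c l : ℝ} (hc : 0 < c) (hl : 0 < l) (Ω : Set E2) (u : E2 → ℂ)
    (hu : MemH10 Ω u) : MemH10 (l⁻¹ • Ω) (fun y => (c : ℂ) * u (l • y)) := by
  obtain ⟨⟨hm, hi, hd, hfi⟩, hz⟩ := hu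
  rw [Measure.restrict_univ] at hm hi hd hfi
  have qmp : Measure.QuasiMeasurePreserving (fun x : E2 => l • x) volume volume :=
    Measure.quasiMeasurePreserving_smul volume hl.ne'
  refine ⟨⟨?_, ?_, ?_, ?_⟩, ?_⟩
  · rw [Measure.restrict_univ]
    exact (hm.comp_quasiMeasurePreserving qmp).const_mul _
  · rw [Measure.restrict_univ]
    have key : (fun x => ‖(c : ℂ) * u (l • x)‖ ^ 2)
        = fun x => c ^ 2 * (fun y => ‖u y‖ ^ 2) (l • x) := by
      funext x
      rw [norm_mul, Complex.norm_real, Real.norm_eq_abs, mul_pow, sq_abs]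
    rw [key]
    exact (hi.comp_smul hl.ne').const_mul _
  · rw [Measure.restrict_univ]
    have h' : ∀ᵐ x : E2, DifferentiableAt ℝ u (l • x) := by
      rw [ae_iff]
      rw [ae_iff] at hd
      exact qmp.preimage_null hd
    filter_upwards [h'] with x hx
    exact (hasFDerivAt_scale c l u hx).differentiableAt
  · rw [Measure.restrict_univ]
    have key : (fun x => ‖fderiv ℝ (fun y => (c : ℂ) * u (l • y)) x‖ ^ 2)
        = fun x => (c * l) ^ 2 * (fun y => ‖fderiv ℝ u y‖ ^ 2) (l • x) := by
      funext x
      rw [fderiv_scale hc.ne' hl.ne' u x, norm_smul, norm_smul, Complex.norm_real,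
        Real.norm_eq_abs, Real.norm_eq_abs]
      dsimp only
      rw [mul_pow, mul_pow, sq_abs, sq_abs]
      ring
    rw [key]
    exact (hfi.comp_smul hl.ne').const_mul _
  · intro x hx
    have : l • x ∉ Ω := by
      rw [Set.mem_inv_smul_set_iff₀ hl.ne'] at hx
      exact hx
    simp [hz _ this]

lemma afEnergy_nonneg (Ω : Set E2) (β : ℝ) (u : E2 → ℂ) : 0 ≤ afEnergy Ω β u :=
  integral_nonneg fun x => Finset.sum_nonneg fun j _ => by positivity

lemma dirichletE_nonneg (Ω : Set E2) (β M : ℝ) : 0 ≤ dirichletE Ω β M := by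
  apply Real.sInf_nonneg
  rintro e ⟨u, -, -, rfl⟩
  exact afEnergy_nonneg Ω β u

lemma dirichletE_scale {c l : ℝ} (hc : 0 < c) (hl : 0 < l) (Ω : Set E2) (β M : ℝ) :
    dirichletE (l⁻¹ • Ω) β (c ^ 2 * (l ^ 2)⁻¹ * M)
      = c ^ 2 * dirichletE Ω (β * c ^ 2 * (l ^ 2)⁻¹) M := by
  unfold dirichletE
  rw [show (c ^ 2 * sInf {e | ∃ u, MemH10 Ω u ∧ mass Ω u = M
        ∧ e = afEnergy Ω (β * c ^ 2 * (l ^ 2)⁻¹) u})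
      = (c ^ 2) • sInf {e | ∃ u, MemH10 Ω u ∧ mass Ω u = M
        ∧ e = afEnergy Ω (β * c ^ 2 * (l ^ 2)⁻¹) u} from rfl,
    ← Real.sInf_smul_of_nonneg (by positivity : (0:ℝ) ≤ c ^ 2)]
  congr 1
  ext e
  simp only [Set.mem_smul_set, Set.mem_setOf_eq, smul_eq_mul]
  constructor
  · rintro ⟨v, hv10, hvm, rfl⟩
    set u : E2 → ℂ := fun y => ((c⁻¹ : ℝ) : ℂ) * v (l⁻¹ • y) with hu_def
    have h10 := memH10_scale (c := c⁻¹) (l := l⁻¹) (by positivity) (by positivity)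
      (l⁻¹ • Ω) v hv10
    rw [inv_inv, smul_smul, mul_inv_cancel₀ hl.ne', one_smul] at h10
    have hm := mass_scale (l := l⁻¹) (by positivity) c⁻¹ (l⁻¹ • Ω) v
    rw [inv_inv, smul_smul, mul_inv_cancel₀ hl.ne', one_smul, hvm] at hm
    have hE := afEnergy_scale (c := c⁻¹) (l := l⁻¹) (by positivity) (by positivity)
      (l⁻¹ • Ω) (β * c ^ 2 * (l ^ 2)⁻¹) v
    rw [inv_inv, smul_smul, mul_inv_cancel₀ hl.ne', one_smul] at hE
    have harg : β * c ^ 2 * (l ^ 2)⁻¹ * c⁻¹ ^ 2 * (l⁻¹ ^ 2)⁻¹ = β := by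
      field_simp
    rw [harg] at hE
    refine ⟨afEnergy Ω (β * c ^ 2 * (l ^ 2)⁻¹) u, ⟨u, h10, ?_, rfl⟩, ?_⟩
    · rw [hm]; field_simp
    · rw [hE]; field_simp
  · rintro ⟨E, ⟨u, hu10, hum, rfl⟩, rfl⟩
    refine ⟨fun y => (c : ℂ) * u (l • y), memH10_scale hc hl Ω u hu10, ?_,
      (afEnergy_scale hc hl Ω β u).symm⟩
    rw [mass_scale hl c Ω u, hum]

lemma memH10_zero (Ω : Set E2) : MemH10 Ω (fun _ => (0 : ℂ)) := by
  refine ⟨⟨aestronglyMeasurable_const, ?_, ?_, ?_⟩, fun _ _ => rfl⟩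
  · simpa using (integrable_zero E2 ℝ (volume.restrict univ))
  · exact Filter.Eventually.of_forall fun x => differentiableAt_const _
  · simpa [fderiv_const] using (integrable_zero E2 ℝ (volume.restrict univ))

lemma afEnergy_zero_fn (Ω : Set E2) (β : ℝ) : afEnergy Ω β (fun _ => (0 : ℂ)) = 0 := by
  unfold afEnergy magKinetic covGrad
  simp [fderiv_const]

lemma dirichletE_zero_mass (Ω : Set E2) (β : ℝ) : dirichletE Ω β 0 = 0 := by
  have hmem : (0 : ℝ) ∈ {e | ∃ u, MemH10 Ω u ∧ mass Ω u = 0 ∧ e = afEnergy Ω β u} :=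
    ⟨fun _ => 0, memH10_zero Ω, by simp [mass], (afEnergy_zero_fn Ω β).symm⟩
  refine le_antisymm (csInf_le ⟨0, ?_⟩ hmem) ?_
  · rintro e ⟨u, -, -, rfl⟩
    exact afEnergy_nonneg Ω β u
  · apply Real.sInf_nonneg
    rintro e ⟨u, -, -, rfl⟩
    exact afEnergy_nonneg Ω β u

/-- **Scaling law for the thermodynamic energy per unit area.**
If `e(β,ρ)` denotes the thermodynamic limit `lim_{L→∞} E₀(LQ,β,ρL²)/L²` (with `Q` the unit
square), then `e(β,ρ) = β ρ² e(1,1)` for all `β ≥ 0`, `ρ ≥ 0`. -/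
theorem thermo_energy_scaling (e : ℝ → ℝ → ℝ)
    (he : ∀ β ρ : ℝ, 0 ≤ β → 0 ≤ ρ →
      Tendsto (fun L : ℝ => dirichletE (L • unitSquare) β (ρ * L ^ 2) / L ^ 2)
        atTop (𝓝 (e β ρ)))
    (β ρ : ℝ) (hβ : 0 ≤ β) (hρ : 0 ≤ ρ) :
    e β ρ = β * ρ ^ 2 * e 1 1 := by
  rcases eq_or_lt_of_le hρ with hρ0 | hρpos
  · have h0 : Tendsto (fun L : ℝ => dirichletE (L • unitSquare) β (ρ * L ^ 2) / L ^ 2)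
        atTop (𝓝 0) := by
      have hfun : (fun L : ℝ => dirichletE (L • unitSquare) β (ρ * L ^ 2) / L ^ 2)
          = fun _ : ℝ => (0 : ℝ) := by
        funext L
        rw [← hρ0, zero_mul, dirichletE_zero_mass, zero_div]
      rw [hfun]
      exact tendsto_const_nhds
    have huniq := tendsto_nhds_unique (he β ρ hβ hρ) h0
    rw [huniq, ← hρ0]
    ring
  · rcases eq_or_lt_of_le hβ with hβ0 | hβpos
    · have key : ∀ L : ℝ, 0 < L →
          dirichletE (L • unitSquare) β (ρ * L ^ 2) = dirichletE unitSquare 0 ρ := by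
        intro L hL
        have h := dirichletE_scale (c := 1) (l := L⁻¹) one_pos (by positivity) unitSquare β ρ
        rw [inv_inv] at h
        have e1 : (1 : ℝ) ^ 2 * ((L⁻¹) ^ 2)⁻¹ * ρ = ρ * L ^ 2 := by
          field_simp
        have e2 : β * (1 : ℝ) ^ 2 * ((L⁻¹) ^ 2)⁻¹ = 0 := by
          rw [← hβ0]; ring
        rw [e1, e2, one_pow, one_mul] at h
        exact h
      have h0 : Tendsto (fun L : ℝ => dirichletE (L • unitSquare) β (ρ * L ^ 2) / L ^ 2)
          atTop (𝓝 0) := by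
        have hbase : Tendsto (fun L : ℝ => dirichletE unitSquare 0 ρ / L ^ 2) atTop (𝓝 0) :=
          tendsto_const_nhds.div_atTop (tendsto_pow_atTop two_ne_zero)
        apply hbase.congr'
        filter_upwards [eventually_gt_atTop 0] with L hL
        rw [key L hL]
      have huniq := tendsto_nhds_unique (he β ρ hβ hρ) h0
      rw [huniq, ← hβ0]
      ring
    · set a := Real.sqrt (β * ρ) with ha_def
      set c := Real.sqrt ρ with hc_def
      have ha : 0 < a := Real.sqrt_pos.2 (by positivity)
      have hc : 0 < c := Real.sqrt_pos.2 hρpos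
      have ha2 : a ^ 2 = β * ρ := Real.sq_sqrt (by positivity)
      have hc2 : c ^ 2 = ρ := Real.sq_sqrt hρpos.le
      have key : ∀ L : ℝ, 0 < L →
          dirichletE (L • unitSquare) β (ρ * L ^ 2)
            = ρ * dirichletE ((a * L) • unitSquare) 1 (1 * (a * L) ^ 2) := by
        intro L hL
        have h := dirichletE_scale (c := c) (l := a) hc ha ((a * L) • unitSquare) β
          (1 * (a * L) ^ 2)
        rw [smul_smul, show a⁻¹ * (a * L) = L by field_simp] at h
        rw [show c ^ 2 * (a ^ 2)⁻¹ * (1 * (a * L) ^ 2) = ρ * L ^ 2 by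
          rw [hc2, mul_pow, ha2]; field_simp] at h
        rw [show β * c ^ 2 * (a ^ 2)⁻¹ = 1 by rw [hc2, ha2]; field_simp] at h
        rw [h, hc2]
      have h1 := he 1 1 zero_le_one zero_le_one
      have h2 : Tendsto (fun L : ℝ => a * L) atTop atTop :=
        Tendsto.const_mul_atTop ha tendsto_id
      have h3 := h1.comp h2
      have h4 := h3.const_mul (β * ρ ^ 2)
      have h5 : Tendsto (fun L : ℝ => dirichletE (L • unitSquare) β (ρ * L ^ 2) / L ^ 2)
          atTop (𝓝 (β * ρ ^ 2 * e 1 1)) := by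
        apply h4.congr'
        filter_upwards [eventually_gt_atTop 0] with L hL
        simp only [Function.comp]
        rw [key L hL]
        rw [mul_pow a L, ha2]
        field_simp
      exact tendsto_nhds_unique (he β ρ hβ hρ) h5
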